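/- For h > 0, let M_h = [[−h/2, 1], [−1, h/2]] be the coefficient matrix of the modified equation of the symplectic Euler method for the harmonic oscillator in the variables (p, q), and let B_h = [[1 − h², h], [−h, 1]] be the matrix of one step of the symplectic Euler method, i.e., p_{n+1} = (1 − h²)p_n + h q_n, q_{n+1} = −h p_n + q_n. Then there exists a constant C > 0 such that for all h ∈ (0, 1], ‖exp(h M_h) − B_h‖ ≤ C h³, where exp denotes the matrix exponential. That is, symplectic Euler approximates the exact flow of its modified equation with local error O(h³). -/

import Mathlib

attribute [local instance]
  Matrix.linftyOpNormedRing Matrix.linftyOpNormedAlgebra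

private lemma sympl_norm22_le {a b c d r : ℝ} (h1 : |a| + |b| ≤ r) (h2 : |c| + |d| ≤ r) :
    ‖(!![a,b;c,d] : Matrix (Fin 2) (Fin 2) ℝ)‖ ≤ r := by
  have hr : 0 ≤ r := le_trans (by positivity) h1
  rw [Matrix.linfty_opNorm_def, ← Real.coe_toNNReal r hr, NNReal.coe_le_coe]
  refine Finset.sup_le fun i _ => ?_
  rw [← NNReal.coe_le_coe, NNReal.coe_sum, Real.coe_toNNReal r hr]
  fin_cases i <;> simpa [Fin.sum_univ_two, Real.norm_eq_abs] using ‹_›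

private lemma sympl_fact_ge (n : ℕ) : 6 * 2 ^ n ≤ (n + 3).factorial := by
  induction n with
  | zero => simp [Nat.factorial]
  | succ n ih =>
    calc 6 * 2 ^ (n + 1) = 2 * (6 * 2 ^ n) := by ring
    _ ≤ 2 * (n + 3).factorial := by omega
    _ ≤ (n + 4) * (n + 3).factorial := Nat.mul_le_mul_right _ (by omega)
    _ = (n + 1 + 3).factorial := (Nat.factorial_succ (n+3)).symm

private lemma sympl_tail_bound (h : ℝ) (h0 : 0 < h) (h1 : h ≤ 1)
    (A : Matrix (Fin 2) (Fin 2) ℝ) (hnA : ‖A‖ ≤ 3/2 * h)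
    (htail : Summable (fun n => (((n+3).factorial :ℝ)⁻¹) • A ^ (n+3))) :
    ‖∑' n, (((n+3).factorial :ℝ)⁻¹) • A ^ (n+3)‖ ≤ (9/4) * h^3 := by
  have hterm : ∀ n : ℕ, ‖(((n+3).factorial :ℝ)⁻¹) • A ^ (n+3)‖ ≤ (27/48) * h^3 * (3/4)^n := by
    intro n
    rw [norm_smul, Real.norm_eq_abs, abs_of_nonneg (by positivity)]
    have p1 : ‖A ^ (n+3)‖ ≤ (3/2*h) ^ (n+3) :=
      le_trans (norm_pow_le' A (by omega)) (pow_le_pow_left₀ (norm_nonneg _) hnA _)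
    have p2 : ((n+3).factorial : ℝ)⁻¹ ≤ (6 * 2^n : ℝ)⁻¹ := by
      apply inv_anti₀ (by positivity)
      exact_mod_cast sympl_fact_ge n
    calc ((n+3).factorial : ℝ)⁻¹ * ‖A ^ (n+3)‖ ≤ (6 * 2^n : ℝ)⁻¹ * (3/2*h)^(n+3) := by
          apply mul_le_mul p2 p1 (norm_nonneg _) (by positivity)
      _ = (27/48) * (h^3 * (3/2*h)^n * (2:ℝ)⁻¹^n) := by
          rw [pow_add, mul_pow, inv_pow]; field_simp; ring
      _ ≤ (27/48) * (h^3 * (3/2)^n * (2:ℝ)⁻¹^n) := by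
          have : (3/2*h)^n ≤ (3/2:ℝ)^n := pow_le_pow_left₀ (by positivity) (by nlinarith) n
          have h3 : (0:ℝ) ≤ h^3 := by positivity
          gcongr
      _ = (27/48) * h^3 * ((3/2:ℝ)^n * 2⁻¹^n) := by ring
      _ = (27/48) * h^3 * (3/4)^n := by rw [← mul_pow]; norm_num
  have hgeo : Summable (fun n : ℕ => (27/48) * h^3 * (3/4:ℝ)^n) :=
    (summable_geometric_of_lt_one (by norm_num) (by norm_num)).mul_left _
  refine le_trans (norm_tsum_le_tsum_norm htail.norm) ?_
  refine le_trans (Summable.tsum_le_tsum hterm htail.norm hgeo) ?_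
  rw [tsum_mul_left, tsum_geometric_of_lt_one (by norm_num) (by norm_num)]
  linarith [pow_nonneg h0.le 3]

/-- For `h > 0` let `M_h = [[−h/2, 1], [−1, h/2]]` be the
coefficient matrix of the modified equation of the symplectic Euler method for
the harmonic oscillator, and let `B_h = [[1 − h², h], [−h, 1]]` be the matrix
of one step of the symplectic Euler method. Then there is a constant `C > 0`
such that for all `h ∈ (0, 1]`, `‖exp(h M_h) − B_h‖ ≤ C h³`: symplectic Euler
approximates the exact flow of its modified equation with local error
`O(h³)`. -/
theorem symplectic_euler_approx_modified_flow_order_three :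
    ∃ C : ℝ, 0 < C ∧ ∀ h ∈ Set.Ioc (0 : ℝ) 1,
      ‖NormedSpace.exp
          (h • (!![-h / 2, 1; -1, h / 2] : Matrix (Fin 2) (Fin 2) ℝ)) -
        (!![1 - h ^ 2, h; -h, 1] : Matrix (Fin 2) (Fin 2) ℝ)‖ ≤ C * h ^ 3 := by
  refine ⟨3, by norm_num, fun h hh => ?_⟩
  obtain ⟨h0, h1⟩ := hh
  set A : Matrix (Fin 2) (Fin 2) ℝ := h • !![-h / 2, 1; -1, h / 2] with hA
  set B : Matrix (Fin 2) (Fin 2) ℝ := !![1 - h ^ 2, h; -h, 1] with hB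
  have hAeq : A = !![-h^2/2, h; -h, h^2/2] := by
    ext i j; fin_cases i <;> fin_cases j <;> simp [hA] <;> ring
  clear_value A B
  have hnA : ‖A‖ ≤ 3/2 * h := by
    rw [hAeq]
    have e1 : |(-h^2/2)| + |h| ≤ 3/2*h := by
      rw [abs_of_nonpos (by nlinarith), abs_of_pos h0]; nlinarith
    have e2 : |(-h)| + |h^2/2| ≤ 3/2*h := by
      rw [abs_of_nonpos (by nlinarith), abs_of_nonneg (by positivity)]; nlinarith
    exact sympl_norm22_le e1 e2
  have hsum : HasSum (fun n => ((n.factorial :ℝ)⁻¹) • A ^ n) (NormedSpace.exp A) :=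
    NormedSpace.exp_series_hasSum_exp' A
  have hsummable : Summable (fun n => ((n.factorial :ℝ)⁻¹) • A ^ n) := hsum.summable
  have htail : Summable (fun n => (((n+3).factorial :ℝ)⁻¹) • A ^ (n+3)) :=
    (summable_nat_add_iff (f := fun n => ((n.factorial :ℝ)⁻¹) • A ^ n) 3).mpr hsummable
  have hsplit : (∑ n ∈ Finset.range 3, ((n.factorial :ℝ)⁻¹) • A ^ n)
      + ∑' n, (((n+3).factorial :ℝ)⁻¹) • A ^ (n+3) = NormedSpace.exp A := by
    rw [hsum.tsum_eq.symm]
    exact Summable.sum_add_tsum_nat_add 3 hsummable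
  have hrange : (∑ n ∈ Finset.range 3, ((n.factorial :ℝ)⁻¹) • A ^ n)
      = 1 + A + (2⁻¹ : ℝ) • (A * A) := by
    rw [Finset.sum_range_succ, Finset.sum_range_succ, Finset.sum_range_one]
    norm_num [Nat.factorial, pow_two]
  have hmid : (1 + A + (2⁻¹ : ℝ) • (A * A)) - B = (h^4/8) • (1 : Matrix (Fin 2) (Fin 2) ℝ) := by
    rw [hAeq, hB]
    ext i j
    fin_cases i <;> fin_cases j <;>
      simp [Matrix.mul_apply, Fin.sum_univ_two, Matrix.one_apply] <;> ring
  have key : NormedSpace.exp A - B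
      = (∑' n, (((n+3).factorial :ℝ)⁻¹) • A ^ (n+3)) + (h^4/8) • (1 : Matrix (Fin 2) (Fin 2) ℝ) := by
    rw [← hsplit, hrange, ← hmid]; abel
  rw [key]
  refine le_trans (norm_add_le _ _) ?_
  have b1 : ‖∑' n, (((n+3).factorial :ℝ)⁻¹) • A ^ (n+3)‖ ≤ (9/4) * h^3 :=
    sympl_tail_bound h h0 h1 A hnA htail
  have b2 : ‖(h^4/8) • (1 : Matrix (Fin 2) (Fin 2) ℝ)‖ ≤ h^4/8 := by
    rw [norm_smul, norm_one, Real.norm_eq_abs, abs_of_nonneg (by positivity)]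
    simp
  have : h^4 ≤ h^3 := pow_le_pow_of_le_one h0.le h1 (by norm_num)
  nlinarith [b1, b2]
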